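/- Let λ be a regular uncountable cardinal with λ < 𝔟. Let ⟨A_n : n < ω⟩ be an ⊆-increasing sequence of infinite subsets of ω with union A, and let ⟨f_α : α < λ⟩ be a <*-increasing sequence in A → Ord such that for each n, ⟨f_α ↾ A_n : α < λ⟩ has an exact upper bound g_n with cf(g_n(i)) = λ for all i ∈ A_n. Then there is a set B ⊆ A with A_n ⊆* B for all n such that ⟨f_α ↾ B : α < λ⟩ has an exact upper bound g with cf(g(i)) = λ for all i ∈ B. -/

import Mathlib

open Cardinal Ordinal

/-- `u <* v`: eventual strict domination on `ℕ → ℕ`. -/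
def ltStarN (u v : ℕ → ℕ) : Prop := {n | v n ≤ u n}.Finite

/-- The bounding number 𝔟. -/
noncomputable def boundingNumber : Cardinal.{0} :=
  sInf {c | ∃ F : Set (ℕ → ℕ), #F = c ∧ ∀ g : ℕ → ℕ, ∃ f ∈ F, ¬ ltStarN f g}

/-- mod-finite domination on a set `S ⊆ ℕ`. -/
def ltStarOn (S : Set ℕ) (u v : ℕ → Ordinal) : Prop := {i | i ∈ S ∧ ¬ u i < v i}.Finite

/-- Every finite set of naturals has a strict upper bound. -/
lemma exists_nat_bound {s : Set ℕ} (hs : s.Finite) : ∃ m, ∀ i ∈ s, i < m := by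
  obtain ⟨m, hm⟩ := hs.bddAbove
  exact ⟨m + 1, fun i hi => Nat.lt_succ_of_le (hm hi)⟩

/-- Any family of size < 𝔟 is eventually dominated by a single function. -/
lemma bdd_of_lt_b {κ : Cardinal.{0}} (h : κ < boundingNumber)
    {ι : Type} (F : ι → ℕ → ℕ) (hι : #ι ≤ κ) : ∃ H, ∀ x, ltStarN (F x) H := by
  by_contra hcon
  push_neg at hcon
  have hmem : #(Set.range F) ∈
      {c | ∃ Fam : Set (ℕ → ℕ), #Fam = c ∧ ∀ g : ℕ → ℕ, ∃ f ∈ Fam, ¬ ltStarN f g} := by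
    refine ⟨Set.range F, rfl, fun g0 => ?_⟩
    obtain ⟨x, hx⟩ := hcon g0
    exact ⟨F x, ⟨x, rfl⟩, hx⟩
  have hle : boundingNumber ≤ #(Set.range F) := csInf_le' hmem
  exact absurd (hle.trans (Cardinal.mk_range_le.trans hι)) (not_le.mpr h)

/-- From `cof o = κ`, a monotone cofinal ladder indexed by `κ.ord.ToType`. -/
lemma exists_ladder {κ : Cardinal.{0}} (hreg : κ.IsRegular) (hunc : ℵ₀ < κ)
    {o : Ordinal.{0}} (h : o.cof = κ) :
    ∃ lad : κ.ord.ToType → Ordinal.{0}, (∀ x, lad x < o) ∧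
      (∀ x y, x ≤ y → lad x ≤ lad y) ∧ (∀ a < o, ∃ x, a ≤ lad x) := by
  haveI : IsWellOrder o.ToType (· < ·) := isWellOrder_lt
  haveI : IsWellOrder κ.ord.ToType (· < ·) := isWellOrder_lt
  obtain ⟨S, hSunb, hScard⟩ := Order.exists_cof_eq (α := o.ToType)
  rw [Ordinal.cof_toType, h] at hScard
  have hk : #(κ.ord.ToType) = #S := by rw [mk_ord_toType, hScard]
  obtain ⟨e⟩ := Cardinal.eq.mp hk
  set φ : κ.ord.ToType → Ordinal := fun x =>
    typein ((· < ·) : o.ToType → o.ToType → Prop) (e x : o.ToType) with hφ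
  have hφlt : ∀ x, φ x < o := by
    intro x
    have := typein_lt_type ((· < ·) : o.ToType → o.ToType → Prop) (e x : o.ToType)
    rwa [type_toType] at this
  have hIic : ∀ x : κ.ord.ToType, #(Set.Iic x) < κ := by
    intro x
    have h1 : #(Set.Iic x) ≤ #(Set.Iio x) + 1 := by
      rw [← Set.Iio_union_right]
      exact (mk_union_le _ _).trans (by rw [mk_singleton])
    exact h1.trans_lt (Cardinal.add_lt_of_lt hreg.aleph0_le (mk_Iio_ord_toType x)
      (one_lt_aleph0.trans hunc))
  refine ⟨fun x => ⨆ y : Set.Iic x, φ y, ?_, ?_, ?_⟩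
  · intro x
    refine Ordinal.iSup_lt_of_lt_cof ?_ fun y => hφlt y
    rw [h]
    exact hIic x
  · intro x y hxy
    refine Ordinal.iSup_le fun z => ?_
    exact Ordinal.le_iSup (fun w : Set.Iic y => φ w) ⟨z.1, z.2.trans hxy⟩
  · intro a ha
    obtain ⟨z, hz⟩ := typein_surj ((· < ·) : o.ToType → o.ToType → Prop)
      (by rwa [type_toType])
    obtain ⟨s, hsS, hs⟩ := hSunb z
    obtain ⟨x, hx⟩ := e.surjective ⟨s, hsS⟩
    have h1 : a ≤ φ x := by
      rw [← hz, hφ]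
      simp only
      rw [typein_le_typein]
      rw [hx]
      exact not_lt.mpr hs
    exact ⟨x, h1.trans (Ordinal.le_iSup (fun w : Set.Iic x => φ w) ⟨x, le_refl x⟩)⟩

/-- for regular uncountable λ < 𝔟, if each ⟨f_α ↾ A_n⟩ has an exact upper bound
of pointwise cofinality λ, then there is B ⊆ A = ⋃ A_n with A_n ⊆* B for all n such that
⟨f_α ↾ B⟩ has an exact upper bound of pointwise cofinality λ. -/
theorem stmt_6 (lam : Cardinal.{0}) (hreg : lam.IsRegular) (hunc : ℵ₀ < lam)
    (hlt : lam < boundingNumber)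
    (A : ℕ → Set ℕ) (hmono : ∀ n, A n ⊆ A (n + 1)) (hinf : ∀ n, (A n).Infinite)
    (f : Ordinal → ℕ → Ordinal)
    (hf : ∀ α < lam.ord, ∀ β < lam.ord, α < β → ltStarOn (⋃ n, A n) (f α) (f β))
    (g : ℕ → ℕ → Ordinal)
    (hub : ∀ n, ∀ α < lam.ord, ltStarOn (A n) (f α) (g n))
    (hexact : ∀ n, ∀ u : ℕ → Ordinal, ltStarOn (A n) u (g n) →
      ∃ α < lam.ord, ltStarOn (A n) u (f α))
    (hcof : ∀ n, ∀ i ∈ A n, (g n i).cof = lam) :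
    ∃ B ⊆ ⋃ n, A n, (∀ n, (A n \ B).Finite) ∧
      ∃ gB : ℕ → Ordinal, (∀ i ∈ B, (gB i).cof = lam) ∧
        (∀ α < lam.ord, ltStarOn B (f α) gB) ∧
        (∀ u : ℕ → Ordinal, ltStarOn B u gB → ∃ α < lam.ord, ltStarOn B u (f α)) := by
  classical
  haveI : IsWellOrder lam.ord.ToType (· < ·) := isWellOrder_lt
  set U : Set ℕ := ⋃ n, A n with hU
  have hAmono : ∀ {m n : ℕ}, m ≤ n → A m ⊆ A n := fun h => monotone_nat_of_le_succ hmono h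
  have hUsub : ∀ n, A n ⊆ U := fun n => Set.subset_iUnion A n
  set lev : ℕ → ℕ := fun i => if h : ∃ n, i ∈ A n then Nat.find h else 0 with hlevdef
  have hlev1 : ∀ i ∈ U, i ∈ A (lev i) := by
    intro i hi
    have h : ∃ n, i ∈ A n := Set.mem_iUnion.mp hi
    simp only [hlevdef, dif_pos h]
    exact Nat.find_spec h
  have hlev2 : ∀ n, ∀ i ∈ A n, lev i ≤ n := by
    intro n i hi
    have h : ∃ m, i ∈ A m := ⟨n, hi⟩
    simp only [hlevdef, dif_pos h]
    exact Nat.find_min' h hi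
  set G : ℕ → Ordinal := fun i => g (lev i) i with hG
  have hposg : ∀ n, ∀ i ∈ A n, 0 < g n i := by
    intro n i hi
    rcases eq_zero_or_pos (g n i) with h0 | h
    · exfalso
      have hc := hcof n i hi
      rw [h0, Ordinal.cof_zero] at hc
      rw [← hc] at hunc
      exact absurd hunc (not_lt.mpr zero_le)
    · exact h
  -- pairwise coherence of the g_n's
  have gEq : ∀ m n, m ≤ n → {i | i ∈ A m ∧ g m i ≠ g n i}.Finite := by
    intro m n hmn
    have T1 : {i | i ∈ A m ∧ g n i < g m i}.Finite := by
      by_contra hfin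
      have hTinf : {i | i ∈ A m ∧ g n i < g m i}.Infinite := hfin
      set u : ℕ → Ordinal := fun i => if g n i < g m i then g n i else 0 with hu
      have h1 : ltStarOn (A m) u (g m) := by
        have hsub : {i | i ∈ A m ∧ ¬ u i < g m i} ⊆ (∅ : Set ℕ) := by
          rintro i ⟨hi, hbad⟩
          exfalso; apply hbad
          by_cases hc : g n i < g m i
          · simpa [hu, hc] using hc
          · simpa [hu, hc] using hposg m i hi
        exact Set.Finite.subset Set.finite_empty hsub
      obtain ⟨α, hα, h2⟩ := hexact m u h1
      have h3 := hub n α hα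
      obtain ⟨i, hi, hibad⟩ := (hTinf.diff (h2.union h3)).nonempty
      obtain ⟨hiAm, hilt⟩ := hi
      simp only [Set.mem_union, Set.mem_setOf_eq, not_or, not_and, not_not] at hibad
      have e2 : u i < f α i := hibad.1 hiAm
      have e3 : f α i < g n i := hibad.2 (hAmono hmn hiAm)
      rw [hu] at e2
      simp only [if_pos hilt] at e2
      exact absurd (e2.trans e3) (lt_irrefl _)
    have T2 : {i | i ∈ A m ∧ g m i < g n i}.Finite := by
      by_contra hfin
      have hTinf : {i | i ∈ A m ∧ g m i < g n i}.Infinite := hfin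
      set u : ℕ → Ordinal := fun i => if g m i < g n i then g m i else 0 with hu
      have h1 : ltStarOn (A n) u (g n) := by
        have hsub : {i | i ∈ A n ∧ ¬ u i < g n i} ⊆ (∅ : Set ℕ) := by
          rintro i ⟨hi, hbad⟩
          exfalso; apply hbad
          by_cases hc : g m i < g n i
          · simpa [hu, hc] using hc
          · simpa [hu, hc] using hposg n i hi
        exact Set.Finite.subset Set.finite_empty hsub
      obtain ⟨α, hα, h2⟩ := hexact n u h1
      have h3 := hub m α hα
      obtain ⟨i, hi, hibad⟩ := (hTinf.diff (h2.union h3)).nonempty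
      obtain ⟨hiAm, hilt⟩ := hi
      simp only [Set.mem_union, Set.mem_setOf_eq, not_or, not_and, not_not] at hibad
      have e2 : u i < f α i := hibad.1 (hAmono hmn hiAm)
      have e3 : f α i < g m i := hibad.2 hiAm
      rw [hu] at e2
      simp only [if_pos hilt] at e2
      exact absurd (e2.trans e3) (lt_irrefl _)
    have hsub : {i | i ∈ A m ∧ g m i ≠ g n i} ⊆
        {i | i ∈ A m ∧ g n i < g m i} ∪ {i | i ∈ A m ∧ g m i < g n i} := by
      rintro i ⟨hi, hne⟩
      rcases lt_or_gt_of_ne hne with hc | hc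
      · exact Or.inr ⟨hi, hc⟩
      · exact Or.inl ⟨hi, hc⟩
    exact (T1.union T2).subset hsub
  have coh : ∀ n, {i | i ∈ A n ∧ G i ≠ g n i}.Finite := by
    intro n
    have hsub : {i | i ∈ A n ∧ G i ≠ g n i} ⊆
        ⋃ m ∈ Set.Iic n, {i | i ∈ A m ∧ g m i ≠ g n i} := by
      rintro i ⟨hi, hne⟩
      exact Set.mem_biUnion (Set.mem_Iic.mpr (hlev2 n i hi)) ⟨hlev1 i (hUsub n hi), hne⟩
    exact (Set.Finite.biUnion (Set.finite_Iic n) (fun m hm => gEq m n (Set.mem_Iic.mp hm))).subset hsub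
  have hcofG : ∀ i ∈ U, (G i).cof = lam := fun i hi => hcof (lev i) i (hlev1 i hi)
  have hGlim : ∀ i ∈ U, Order.IsSuccLimit (G i) := by
    intro i hi
    exact Ordinal.aleph0_le_cof.mp (by rw [hcofG i hi]; exact hreg.aleph0_le)
  -- ladders
  have hladex : ∀ i, ∃ L : lam.ord.ToType → Ordinal,
      i ∈ U → ((∀ x, L x < G i) ∧ (∀ x y, x ≤ y → L x ≤ L y) ∧ (∀ a < G i, ∃ x, a ≤ L x)) := by
    intro i
    by_cases hi : i ∈ U
    · obtain ⟨L, h1, h2, h3⟩ := exists_ladder hreg hunc (hcofG i hi)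
      exact ⟨L, fun _ => ⟨h1, h2, h3⟩⟩
    · exact ⟨fun _ => 0, fun hh => absurd hh hi⟩
  choose L hL using hladex
  set lh : lam.ord.ToType → ℕ → Ordinal := fun x i => if i ∈ U then L i x else 0 with hlh
  -- per-level domination of the ladder functions
  have step1 : ∀ x n, ltStarOn (A n) (lh x) (g n) := by
    intro x n
    have hsub : {i | i ∈ A n ∧ ¬ lh x i < g n i} ⊆ {i | i ∈ A n ∧ G i ≠ g n i} := by
      rintro i ⟨hi, hbad⟩
      refine ⟨hi, fun heq => hbad ?_⟩
      have hiU : i ∈ U := hUsub n hi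
      rw [hlh]
      simp only [if_pos hiU]
      exact heq ▸ (hL i hiU).1 x
    exact (coh n).subset hsub
  have step2 : ∀ x n, ∃ α, α < lam.ord ∧ ltStarOn (A n) (lh x) (f α) := by
    intro x n
    obtain ⟨α, hα, h⟩ := hexact n (lh x) (step1 x n)
    exact ⟨α, hα, h⟩
  choose axn haxn1 haxn2 using step2
  have hcoford : lam.ord.cof = lam := hreg.cof_eq
  have hordlim : Order.IsSuccLimit lam.ord := Cardinal.isSuccLimit_ord hreg.aleph0_le
  have hsupax : ∀ x, (⨆ n, axn x n) < lam.ord := by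
    intro x
    refine Ordinal.iSup_lt_of_lt_cof ?_ fun n => haxn1 x n
    rw [hcoford, Cardinal.mk_nat]
    exact hunc
  set ax : lam.ord.ToType → Ordinal := fun x => (⨆ n, axn x n) + 1 with hax
  have haxlt : ∀ x, ax x < lam.ord := by
    intro x
    rw [hax]
    simp only
    rw [Ordinal.add_one_eq_succ]
    exact hordlim.succ_lt (hsupax x)
  have haxgt : ∀ x n, axn x n < ax x := by
    intro x n
    have h1 : axn x n ≤ ⨆ m, axn x m := Ordinal.le_iSup _ n
    rw [hax]
    simp only
    rw [Ordinal.add_one_eq_succ]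
    exact h1.trans_lt (Order.lt_succ _)
  have Wfin : ∀ x n, {i | i ∈ A n ∧ ¬ lh x i < f (ax x) i}.Finite := by
    intro x n
    have hff := hf (axn x n) (haxn1 x n) (ax x) (haxlt x) (haxgt x n)
    have hsub : {i | i ∈ A n ∧ ¬ lh x i < f (ax x) i} ⊆
        {i | i ∈ A n ∧ ¬ lh x i < f (axn x n) i} ∪ {i | i ∈ U ∧ ¬ f (axn x n) i < f (ax x) i} := by
      rintro i ⟨hi, hbad⟩
      by_cases h1 : lh x i < f (axn x n) i
      · exact Or.inr ⟨hUsub n hi, fun h2 => hbad (h1.trans h2)⟩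
      · exact Or.inl ⟨hi, h1⟩
    exact ((haxn2 x n).union hff).subset hsub
  have Ffin : ∀ α, α < lam.ord → ∀ n, {i | i ∈ A n ∧ ¬ f α i < G i}.Finite := by
    intro α hα n
    have h3 := hub n α hα
    have hsub : {i | i ∈ A n ∧ ¬ f α i < G i} ⊆
        {i | i ∈ A n ∧ ¬ f α i < g n i} ∪ {i | i ∈ A n ∧ G i ≠ g n i} := by
      rintro i ⟨hi, hbad⟩
      by_cases h1 : G i = g n i
      · exact Or.inl ⟨hi, by rwa [h1] at hbad⟩
      · exact Or.inr ⟨hi, h1⟩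
    exact (h3.union (coh n)).subset hsub
  choose W hW using fun x n => exists_nat_bound (Wfin x n)
  have htypein : ∀ x : lam.ord.ToType, typein (α := lam.ord.ToType) (· < ·) x < lam.ord :=
    fun x => typein_lt_self x
  choose Fb hFb using fun (x : lam.ord.ToType) n =>
    exists_nat_bound (Ffin (typein (α := lam.ord.ToType) (· < ·) x) (htypein x) n)
  set K : lam.ord.ToType → ℕ → ℕ := fun x n => max (W x n) (Fb x n) with hK
  obtain ⟨H, hH⟩ := bdd_of_lt_b hlt K (le_of_eq (mk_ord_toType lam))
  set B : Set ℕ := {i | i ∈ U ∧ H (lev i) ≤ i} with hB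
  have key : ∀ (x : lam.ord.ToType) (P : ℕ → Prop),
      (∀ n, {i | i ∈ A n ∧ P i}.Finite) →
      (∀ n i, i ∈ A n → P i → i < K x n) →
      {i | i ∈ B ∧ P i}.Finite := by
    intro x P hPf hPb
    have hS : {n | H n ≤ K x n}.Finite := hH x
    have hsub : {i | i ∈ B ∧ P i} ⊆ ⋃ n ∈ {n | H n ≤ K x n}, {i | i ∈ A n ∧ P i} := by
      rintro i ⟨⟨hiU, hiH⟩, hiP⟩
      have hiA : i ∈ A (lev i) := hlev1 i hiU
      have hn : H (lev i) ≤ K x (lev i) := by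
        by_contra hlt'
        push_neg at hlt'
        exact absurd (hPb (lev i) i hiA hiP) (not_lt.mpr (hlt'.le.trans hiH))
      exact Set.mem_biUnion hn ⟨hiA, hiP⟩
    exact (hS.biUnion (fun n _ => hPf n)).subset hsub
  refine ⟨B, fun i hi => hi.1, ?_, G, fun i hi => hcofG i hi.1, ?_, ?_⟩
  · -- A n ⊆* B
    intro n
    apply (Set.finite_Iio ((Finset.range (n + 1)).sup H)).subset
    rintro i ⟨hiA, hiB⟩
    have hiU : i ∈ U := hUsub n hiA
    have h1 : ¬ H (lev i) ≤ i := fun hh => hiB ⟨hiU, hh⟩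
    have h2 : H (lev i) ≤ (Finset.range (n + 1)).sup H :=
      Finset.le_sup (Finset.mem_range.mpr (Nat.lt_succ_of_le (hlev2 n i hiA)))
    exact Set.mem_Iio.mpr (lt_of_lt_of_le (not_le.mp h1) h2)
  · -- upper bound
    intro α hα
    obtain ⟨x, hx⟩ := typein_surj ((· < ·) : lam.ord.ToType → lam.ord.ToType → Prop)
      (by rw [type_toType]; exact hα)
    have hPb : ∀ n i, i ∈ A n → ¬ f α i < G i → i < K x n := by
      intro n i hi hP
      exact (hFb x n i ⟨hi, by rwa [hx]⟩).trans_le (le_max_right _ _)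
    exact key x (fun i => ¬ f α i < G i) (Ffin α hα) hPb
  · -- exactness
    intro u hu
    have hxiex : ∀ i : ℕ, ∃ x : lam.ord.ToType, (i ∈ U ∧ u i < G i) → u i < L i x := by
      intro i
      by_cases hi : i ∈ U ∧ u i < G i
      · obtain ⟨hiU, hui⟩ := hi
        have hsucc : u i + 1 < G i := by
          rw [Ordinal.add_one_eq_succ]
          exact (hGlim i hiU).succ_lt hui
        obtain ⟨x, hx⟩ := (hL i hiU).2.2 (u i + 1) hsucc
        refine ⟨x, fun _ => ?_⟩
        have hlt1 : u i < u i + 1 := by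
          rw [Ordinal.add_one_eq_succ]
          exact Order.lt_succ _
        exact hlt1.trans_le hx
      · have hne : Nonempty lam.ord.ToType := nonempty_toType_iff.mpr
          (ne_of_gt (Cardinal.lt_ord.mpr (by simpa using aleph0_pos.trans hunc)))
        exact ⟨hne.some, fun hh => absurd hh hi⟩
    choose xi hxiP using hxiex
    have hsupxi : (⨆ i, typein (α := lam.ord.ToType) (· < ·) (xi i)) < lam.ord := by
      refine Ordinal.iSup_lt_of_lt_cof ?_ fun i => typein_lt_self (xi i)
      rw [hcoford, Cardinal.mk_nat]
      exact hunc
    obtain ⟨xs, hxs⟩ := typein_surj ((· < ·) : lam.ord.ToType → lam.ord.ToType → Prop)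
      (by rw [type_toType]; exact hsupxi)
    have hxile : ∀ i, xi i ≤ xs := by
      intro i
      have h1 : typein (α := lam.ord.ToType) (· < ·) (xi i) ≤
          typein (α := lam.ord.ToType) (· < ·) xs := by
        rw [hxs]
        exact Ordinal.le_iSup _ i
      exact (typein_le_typein' lam.ord).mp h1
    refine ⟨ax xs, haxlt xs, ?_⟩
    have hkey := key xs (fun i => ¬ lh xs i < f (ax xs) i) (Wfin xs)
      (fun n i hi hP => (hW xs n i ⟨hi, hP⟩).trans_le (le_max_left _ _))
    have hsub : {i | i ∈ B ∧ ¬ u i < f (ax xs) i} ⊆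
        {i | i ∈ B ∧ ¬ u i < G i} ∪ {i | i ∈ B ∧ ¬ lh xs i < f (ax xs) i} := by
      rintro i ⟨hiB, hbad⟩
      by_cases h1 : u i < G i
      · refine Or.inr ⟨hiB, fun h2 => hbad ?_⟩
        have hiU : i ∈ U := hiB.1
        have h3 : u i < L i (xi i) := hxiP i ⟨hiU, h1⟩
        have h4 : L i (xi i) ≤ L i xs := (hL i hiU).2.1 _ _ (hxile i)
        have h5 : lh xs i = L i xs := by rw [hlh]; simp only [if_pos hiU]
        exact (h3.trans_le h4).trans (h5 ▸ h2)
      · exact Or.inl ⟨hiB, h1⟩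
    have hu' : {i | i ∈ B ∧ ¬ u i < G i}.Finite := hu
    exact (hu'.union hkey).subset hsub
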